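/- Consider the convex optimization problem: minimize f = M·μ + M·σ + (2M+1)·θ + ν/W − 2M subject to (1−μ)^+ + (1−σ)^+ + (1−θ)^+ + (Wα_S − ν)^+ ≤ r, μ,σ,θ,ν ≥ 0, μ+θ ≥ 1, σ+θ ≥ 1, where M ≥ 1 is an integer, W > 0, α_S > 0, and W·α_S < 1. If W ≤ 1/(2M+1), then the minimum value equals: 2M+1+α_S − r/W for 0 ≤ r ≤ W·α_S, and (2M+1)(1+W·α_S) − (2M+1)·r for W·α_S ≤ r ≤ 1 + W·α_S. -/

import Mathlib

set_option maxHeartbeats 1000000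


/-- Feasible objective values of the sum-rate diversity-order LP for the
`(M,1,1,M)` side-channel assisted full-duplex network with CSIT. -/
def sumDivSet (M : ℕ) (W αS r : ℝ) : Set ℝ :=
  {y : ℝ | ∃ μ σ θ ν : ℝ, 0 ≤ μ ∧ 0 ≤ σ ∧ 0 ≤ θ ∧ 0 ≤ ν ∧
    1 ≤ μ + θ ∧ 1 ≤ σ + θ ∧
    max (1 - μ) 0 + max (1 - σ) 0 + max (1 - θ) 0 + max (W * αS - ν) 0 ≤ r ∧
    y = (M : ℝ) * μ + (M : ℝ) * σ + (2 * (M : ℝ) + 1) * θ + ν / W - 2 * (M : ℝ)}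

/-- When `W ≤ 1/(2M+1)` and `W·αS < 1`, the minimum of the sum diversity-order LP
equals `2M+1+αS − r/W` for `0 ≤ r ≤ W·αS`, and
`(2M+1)(1+W·αS) − (2M+1)·r` for `W·αS ≤ r ≤ 1 + W·αS`. -/
theorem sum_diversity_lp_small_W (M : ℕ) (hM : 1 ≤ M) (W αS : ℝ)
    (hW : 0 < W) (hS : 0 < αS) (hWS : W * αS < 1)
    (hWle : W ≤ 1 / (2 * (M : ℝ) + 1)) :
    (∀ r : ℝ, 0 ≤ r → r ≤ W * αS →
      IsLeast (sumDivSet M W αS r) (2 * (M : ℝ) + 1 + αS - r / W)) ∧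
    (∀ r : ℝ, W * αS ≤ r → r ≤ 1 + W * αS →
      IsLeast (sumDivSet M W αS r)
        ((2 * (M : ℝ) + 1) * (1 + W * αS) - (2 * (M : ℝ) + 1) * r)) := by
  have hMR : (1:ℝ) ≤ (M:ℝ) := by exact_mod_cast hM
  have h2M : (0:ℝ) < 2 * (M:ℝ) + 1 := by linarith
  have hWinv : 2 * (M:ℝ) + 1 ≤ 1 / W := by
    rw [le_div_iff₀ hW]
    rw [le_div_iff₀ h2M] at hWle
    linarith
  constructor
  · intro r hr0 hr1
    constructor
    · refine ⟨1, 1, 1, W * αS - r, by norm_num, by norm_num, by norm_num,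
        by linarith, by norm_num, by norm_num, ?_, ?_⟩
      · have h2 : W * αS - (W * αS - r) = r := by ring
        rw [h2, max_eq_left hr0]
        norm_num
      · field_simp
        ring
    · rintro y ⟨μ, σ, θ, ν, hμ0, hσ0, hθ0, hν0, hμθ, hσθ, hcon, hy⟩
      set a := max (1 - μ) 0 with ha
      set b := max (1 - σ) 0 with hb
      set c := max (1 - θ) 0 with hc
      set d := max (W * αS - ν) 0 with hd
      have ha1 : 1 - μ ≤ a := le_max_left _ _
      have hb1 : 1 - σ ≤ b := le_max_left _ _
      have hc1 : 1 - θ ≤ c := le_max_left _ _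
      have hd1 : W * αS - ν ≤ d := le_max_left _ _
      have ha0 : 0 ≤ a := le_max_right _ _
      have hb0 : 0 ≤ b := le_max_right _ _
      have hc0 : 0 ≤ c := le_max_right _ _
      have hd0 : 0 ≤ d := le_max_right _ _
      have h1 : (M:ℝ) * (1 - a) ≤ (M:ℝ) * μ :=
        mul_le_mul_of_nonneg_left (by linarith) (by linarith)
      have h2 : (M:ℝ) * (1 - b) ≤ (M:ℝ) * σ :=
        mul_le_mul_of_nonneg_left (by linarith) (by linarith)
      have h3 : (2 * (M:ℝ) + 1) * (1 - c) ≤ (2 * (M:ℝ) + 1) * θ :=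
        mul_le_mul_of_nonneg_left (by linarith) (by linarith)
      have h4 : αS - d / W ≤ ν / W := by
        have h4' : (W * αS - d) / W ≤ ν / W :=
          (div_le_div_iff_of_pos_right hW).mpr (by linarith)
        have heq : (W * αS - d) / W = αS - d / W := by
          field_simp
        linarith [heq ▸ h4']
      have h5 : (a + b + c + d) / W ≤ r / W := (div_le_div_iff_of_pos_right hW).mpr hcon
      have h6 : (2 * (M:ℝ) + 1) * (a + b + c) ≤ (1 / W) * (a + b + c) :=
        mul_le_mul_of_nonneg_right hWinv (by linarith)
      have h6' : (1 / W) * (a + b + c) = (a + b + c) / W := one_div_mul_eq_div _ _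
      rw [h6'] at h6
      have hsplit : (a + b + c + d) / W = (a + b + c) / W + d / W := by ring
      have hma : 0 ≤ (M:ℝ) * a := mul_nonneg (by linarith) ha0
      have hmb : 0 ≤ (M:ℝ) * b := mul_nonneg (by linarith) hb0
      rw [hy]
      nlinarith [h1, h2, h3, h4, h5, h6, hsplit, hma, hmb, ha0, hb0]
  · intro r hr0 hr1
    constructor
    · refine ⟨1, 1, 1 + W * αS - r, 0, by norm_num, by norm_num, by linarith,
        le_refl 0, by linarith, by linarith, ?_, ?_⟩
      · have h2 : (1:ℝ) - (1 + W * αS - r) = r - W * αS := by ring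
        have h3 : W * αS - 0 = W * αS := by ring
        rw [h2, h3, max_eq_left (by linarith : (0:ℝ) ≤ r - W * αS),
          max_eq_left (by positivity : (0:ℝ) ≤ W * αS)]
        norm_num
      · rw [zero_div]
        ring
    · rintro y ⟨μ, σ, θ, ν, hμ0, hσ0, hθ0, hν0, hμθ, hσθ, hcon, hy⟩
      set a := max (1 - μ) 0 with ha
      set b := max (1 - σ) 0 with hb
      set c := max (1 - θ) 0 with hc
      set d := max (W * αS - ν) 0 with hd
      have ha1 : 1 - μ ≤ a := le_max_left _ _
      have hb1 : 1 - σ ≤ b := le_max_left _ _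
      have hc1 : 1 - θ ≤ c := le_max_left _ _
      have hd1 : W * αS - ν ≤ d := le_max_left _ _
      have ha0 : 0 ≤ a := le_max_right _ _
      have hb0 : 0 ≤ b := le_max_right _ _
      have hc0 : 0 ≤ c := le_max_right _ _
      have hd0 : 0 ≤ d := le_max_right _ _
      have h1 : (M:ℝ) * (1 - a) ≤ (M:ℝ) * μ :=
        mul_le_mul_of_nonneg_left (by linarith) (by linarith)
      have h2 : (M:ℝ) * (1 - b) ≤ (M:ℝ) * σ :=
        mul_le_mul_of_nonneg_left (by linarith) (by linarith)
      have h3 : (2 * (M:ℝ) + 1) * (1 - c) ≤ (2 * (M:ℝ) + 1) * θ :=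
        mul_le_mul_of_nonneg_left (by linarith) (by linarith)
      have hν2 : (2 * (M:ℝ) + 1) * ν ≤ (1 / W) * ν :=
        mul_le_mul_of_nonneg_right hWinv hν0
      have hν2' : (1 / W) * ν = ν / W := one_div_mul_eq_div _ _
      rw [hν2'] at hν2
      have hd3 : (2 * (M:ℝ) + 1) * (W * αS - ν) ≤ (2 * (M:ℝ) + 1) * d :=
        mul_le_mul_of_nonneg_left hd1 (by linarith)
      have hr3 : (2 * (M:ℝ) + 1) * (a + b + c + d) ≤ (2 * (M:ℝ) + 1) * r :=
        mul_le_mul_of_nonneg_left hcon (by linarith)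
      have hma : 0 ≤ (M:ℝ) * a := mul_nonneg (by linarith) ha0
      have hmb : 0 ≤ (M:ℝ) * b := mul_nonneg (by linarith) hb0
      rw [hy]
      nlinarith [h1, h2, h3, hν2, hd3, hr3, hma, hmb, ha0, hb0]
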